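/- For fixed complex numbers a_1, …, a_n, the function f : ℂ → ℂ sending x to the determinant of the (n+1)×(n+1) Vieta matrix of the n+1 numbers a_1, …, a_n, x is given by a polynomial in x of degree at most n, i.e. there exists a polynomial p ∈ ℂ[X] with deg p ≤ n such that f(x) = p(x) for all x ∈ ℂ; moreover f(a_m) = 0 for every m ∈ {1, …, n}. -/
import Mathlib

open Polynomial Finset

/-- The Vieta matrix of `a : Fin n → ℂ`: its `(i, j)` entry is the elementary
symmetric polynomial of degree `i` evaluated at the numbers `a k` for `k ≠ j`. -/
noncomputable def vietaMatrix (n : ℕ) (a : Fin n → ℂ) : Matrix (Fin n) (Fin n) ℂ :=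
  Matrix.of fun i j => ((Finset.univ.erase j).val.map a).esymm i

namespace VietaAux

variable {R S : Type*} [CommRing R] [CommRing S]

lemma esymm_hom (f : R →+* S) (s : Multiset R) (i : ℕ) :
    (s.map f).esymm i = f (s.esymm i) := by
  rw [Multiset.esymm, Multiset.esymm, Multiset.powersetCard_map, Multiset.map_map,
    map_multiset_sum, Multiset.map_map]
  refine congrArg _ (Multiset.map_congr rfl fun u _ => ?_)
  simp [map_multiset_prod]

lemma erase_last_map {n : ℕ} (g : Fin (n + 1) → R) :
    (Finset.univ.erase (Fin.last n)).val.map g =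
      Finset.univ.val.map (g ∘ Fin.castSucc) := by
  rw [Finset.erase_val, Fin.univ_castSuccEmb, Finset.cons_val, Multiset.erase_cons_head,
    Finset.map_val, Multiset.map_map]
  rfl

lemma erase_castSucc_map {n : ℕ} (g : Fin (n + 1) → R) (m : Fin n) :
    (Finset.univ.erase (Fin.castSucc m)).val.map g =
      g (Fin.last n) ::ₘ (Finset.univ.erase m).val.map (g ∘ Fin.castSucc) := by
  rw [Finset.erase_val, Fin.univ_castSuccEmb]
  have hne : Fin.last n ≠ Fin.castSucc m := (Fin.castSucc_lt_last m).ne'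
  rw [Finset.cons_val, Multiset.erase_cons_tail _ hne, Finset.map_val]
  simp only [Fin.coe_castSuccEmb]
  rw [← Multiset.map_erase _ (Fin.castSucc_injective n), ← Finset.erase_val,
    Multiset.map_cons, Multiset.map_map]

lemma degree_msum_le (l : Multiset ℂ[X]) (b : WithBot ℕ) (h : ∀ p ∈ l, p.degree ≤ b) :
    l.sum.degree ≤ b := by
  induction l using Multiset.induction with
  | empty => simpa using (by exact bot_le : (⊥ : WithBot ℕ) ≤ b)
  | cons q l ih =>
    rw [Multiset.sum_cons]
    exact (Polynomial.degree_add_le _ _).trans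
      (max_le (h q (Multiset.mem_cons_self _ _)) (ih fun p hp => h p (Multiset.mem_cons_of_mem hp)))

lemma degree_mprod_le (l : Multiset ℂ[X]) (h : ∀ p ∈ l, p.degree ≤ 0) :
    l.prod.degree ≤ 0 := by
  induction l using Multiset.induction with
  | empty => simp
  | cons q l ih =>
    rw [Multiset.prod_cons]
    refine (Polynomial.degree_mul_le _ _).trans ?_
    have := h q (Multiset.mem_cons_self _ _)
    have h2 := ih fun p hp => h p (Multiset.mem_cons_of_mem hp)
    calc q.degree + l.prod.degree ≤ 0 + 0 := add_le_add this h2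
    _ = 0 := by simp

lemma degree_esymm_le_zero (s : Multiset ℂ[X]) (i : ℕ) (h : ∀ p ∈ s, p.degree ≤ 0) :
    (s.esymm i).degree ≤ 0 := by
  refine degree_msum_le _ _ fun p hp => ?_
  obtain ⟨u, hu, rfl⟩ := Multiset.mem_map.mp hp
  exact degree_mprod_le u fun q hq =>
    h q (Multiset.mem_of_le (Multiset.mem_powersetCard.mp hu).1 hq)

lemma degree_prod_le_one (t u : Multiset ℂ[X]) (hu : u ≤ Polynomial.X ::ₘ t)
    (ht : ∀ p ∈ t, p.degree ≤ 0) : u.prod.degree ≤ 1 := by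
  by_cases hX : (Polynomial.X : ℂ[X]) ∈ u
  · have h1 : u = Polynomial.X ::ₘ u.erase Polynomial.X := (Multiset.cons_erase hX).symm
    have h2 : u.erase Polynomial.X ≤ t := by
      simpa using Multiset.erase_le_erase (Polynomial.X : ℂ[X]) hu
    rw [h1, Multiset.prod_cons]
    refine (Polynomial.degree_mul_le _ _).trans ?_
    calc Polynomial.X.degree + (u.erase Polynomial.X).prod.degree ≤ 1 + 0 := by
          exact add_le_add Polynomial.degree_X_le
            (degree_mprod_le _ fun q hq => ht q (Multiset.mem_of_le h2 hq))
      _ = 1 := by simp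
  · have h2 : u ≤ t := by
      rw [Multiset.le_iff_count]
      intro b
      have := (Multiset.le_iff_count.mp hu) b
      rcases eq_or_ne b (Polynomial.X : ℂ[X]) with rfl | hb
      · simp [Multiset.count_eq_zero_of_notMem hX]
      · rwa [Multiset.count_cons_of_ne hb] at this
    exact (degree_mprod_le _ fun q hq => ht q (Multiset.mem_of_le h2 hq)).trans (by norm_num)

lemma degree_esymm_le_one (t : Multiset ℂ[X]) (i : ℕ) (ht : ∀ p ∈ t, p.degree ≤ 0) :
    ((Polynomial.X ::ₘ t).esymm i).degree ≤ 1 := by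
  refine degree_msum_le _ _ fun p hp => ?_
  obtain ⟨u, hu, rfl⟩ := Multiset.mem_map.mp hp
  exact degree_prod_le_one t u (Multiset.mem_powersetCard.mp hu).1 ht

lemma degree_det_le {N : ℕ} (M : Matrix (Fin N) (Fin N) ℂ[X]) (d : Fin N → ℕ)
    (h : ∀ i j, (M i j).degree ≤ d j) : M.det.degree ≤ (∑ j, d j : ℕ) := by
  rw [Matrix.det_apply']
  refine (Polynomial.degree_sum_le _ _).trans (Finset.sup_le fun σ _ => ?_)
  refine (Polynomial.degree_mul_le _ _).trans ?_
  have h1 : ((Equiv.Perm.sign σ : ℤ) : ℂ[X]).degree ≤ 0 := Polynomial.degree_intCast_le _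
  have h2 : (∏ i, M (σ i) i).degree ≤ (∑ j, d j : ℕ) := by
    refine (Polynomial.degree_prod_le _ _).trans ?_
    rw [Nat.cast_sum]
    exact Finset.sum_le_sum fun j _ => h (σ j) j
  calc ((Equiv.Perm.sign σ : ℤ) : ℂ[X]).degree + (∏ i, M (σ i) i).degree
      ≤ 0 + (∑ j, d j : ℕ) := add_le_add h1 h2
    _ = (∑ j, d j : ℕ) := by simp

end VietaAux

open VietaAux in
theorem vieta_det_snoc_polynomial (n : ℕ) (hn : 1 ≤ n) (a : Fin n → ℂ)
    (f : ℂ → ℂ) (hf : ∀ x : ℂ, f x = (vietaMatrix (n + 1) (Fin.snoc a x)).det) :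
    (∃ p : Polynomial ℂ, p.degree ≤ n ∧ ∀ x : ℂ, f x = p.eval x) ∧
      ∀ m : Fin n, f (a m) = 0 := by
  constructor
  · set b : Fin (n + 1) → ℂ[X] := Fin.snoc (fun k => Polynomial.C (a k)) Polynomial.X with hb
    have hbc : b ∘ Fin.castSucc = fun k => Polynomial.C (a k) := by
      funext k; simp [hb, Fin.snoc_castSucc]
    have hbl : b (Fin.last n) = Polynomial.X := by simp [hb]
    set P : Matrix (Fin (n + 1)) (Fin (n + 1)) ℂ[X] :=
      Matrix.of fun i j => ((Finset.univ.erase j).val.map b).esymm i with hP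
    refine ⟨P.det, ?_, ?_⟩
    · have hdeg : ∀ i j, (P i j).degree ≤ (if j = Fin.last n then 0 else 1 : ℕ) := by
        intro i j
        induction j using Fin.lastCases with
        | last =>
          simp only [if_pos rfl, Nat.cast_zero, hP, Matrix.of_apply]
          rw [erase_last_map, hbc]
          refine degree_esymm_le_zero _ _ fun p hp => ?_
          obtain ⟨k, _, rfl⟩ := Multiset.mem_map.mp hp
          exact Polynomial.degree_C_le
        | cast m =>
          rw [if_neg (Fin.castSucc_lt_last m).ne, Nat.cast_one]
          show (((Finset.univ.erase (Fin.castSucc m)).val.map b).esymm i).degree ≤ 1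
          rw [erase_castSucc_map, hbl, hbc]
          refine degree_esymm_le_one _ _ fun p hp => ?_
          obtain ⟨k, _, rfl⟩ := Multiset.mem_map.mp hp
          exact Polynomial.degree_C_le
      refine (degree_det_le P _ hdeg).trans ?_
      have : (∑ j : Fin (n + 1), if j = Fin.last n then 0 else 1 : ℕ) = n := by
        rw [Fin.sum_univ_castSucc]
        simp [(fun m : Fin n => (Fin.castSucc_lt_last m).ne)]
      rw [this]
    · intro x
      rw [hf x, ← Polynomial.coe_evalRingHom, RingHom.map_det]
      congr 1
      ext i j
      have hval : Polynomial.eval x ∘ b = Fin.snoc a x := by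
        funext k
        induction k using Fin.lastCases with
        | last => simp [hb]
        | cast m => simp [hb, Fin.snoc_castSucc]
      simp only [RingHom.mapMatrix_apply, Matrix.map_apply, hP, Matrix.of_apply,
        Polynomial.coe_evalRingHom, vietaMatrix]
      rw [← Polynomial.coe_evalRingHom, ← esymm_hom, Multiset.map_map,
        Polynomial.coe_evalRingHom, hval]
  · intro m
    rw [hf (a m)]
    refine Matrix.det_zero_of_column_eq (i := Fin.castSucc m) (j := Fin.last n)
      (Fin.castSucc_lt_last m).ne fun i => ?_
    have hcomp : Fin.snoc a (a m) ∘ Fin.castSucc = a := by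
      funext k; simp [Fin.snoc_castSucc]
    have key : (Finset.univ.erase (Fin.castSucc m)).val.map (Fin.snoc a (a m)) =
        (Finset.univ.erase (Fin.last n)).val.map (Fin.snoc a (a m)) := by
      rw [erase_castSucc_map, erase_last_map, hcomp]
      have : (Finset.univ : Finset (Fin n)).val = m ::ₘ (Finset.univ.erase m).val := by
        rw [Finset.erase_val, Multiset.cons_erase (Finset.mem_univ_val _)]
      rw [this, Multiset.map_cons]
      simp [Fin.snoc_last]
    simp only [vietaMatrix, Matrix.of_apply, key]
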